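/- Let H be a graph on v vertices that is bicycle-free at radius r, and assume r ≥ 10·ln v. Then the excess of H satisfies exc(H) ≤ (ln(e·v)/r)·v. -/

import Mathlib

open scoped Classical

namespace NearRamanujan

variable {V : Type*} [Fintype V] [DecidableEq V]

/-- The set of vertices within distance `r` of `v` in `G`. -/
noncomputable def ball (G : SimpleGraph V) (v : V) (r : ℕ) : Finset V :=
  Finset.univ.filter (fun u => ∃ p : G.Walk v u, p.length ≤ r)

/-- The number of edges of the subgraph of `G` induced on the vertex set `S`. -/
noncomputable def edgesWithin (G : SimpleGraph V) (S : Finset V) : ℕ :=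
  (G.edgeFinset.filter (fun e => ∀ x ∈ e, x ∈ S)).card

/-- `G` is bicycle-free at radius `r`: the subgraph induced on each radius-`r` ball
(which is a connected graph) contains at most one cycle, equivalently it has at most
as many edges as vertices. -/
def BicycleFree (G : SimpleGraph V) (r : ℕ) : Prop :=
  ∀ v : V, edgesWithin G (ball G v r) ≤ (ball G v r).card

/-- The value in `{±1}` of an edge-signing `σ : G.edgeSet → Bool` on `e` (`0` off the edges). -/
noncomputable def edgeSign (G : SimpleGraph V) (σ : G.edgeSet → Bool) (e : Sym2 V) : ℝ :=
  if h : e ∈ G.edgeSet then (if σ ⟨e, h⟩ then 1 else -1) else 0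

/-- The signed adjacency matrix of the edge-signing `σ` of `G`. -/
noncomputable def signedAdj (G : SimpleGraph V) (σ : G.edgeSet → Bool) : Matrix V V ℝ :=
  fun u v => if G.Adj u v then edgeSign G σ s(u, v) else 0

/-- The signed non-backtracking matrix of the edge-signing `σ` of `G`, indexed by
the darts (directed edges) of `G`. -/
noncomputable def nbMatrix (G : SimpleGraph V) (σ : G.edgeSet → Bool) :
    Matrix G.Dart G.Dart ℝ :=
  fun e f => if e.snd = f.fst ∧ f.snd ≠ e.fst then edgeSign G σ s(f.fst, f.snd) else 0


set_option linter.unusedSectionVars false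

open SimpleGraph Finset

/-! ### Non-backtracking walks -/

/-- The compatibility relation on consecutive darts of a non-backtracking walk:
if `d₁ = (a,b)` and `d₂ = (b,c)` then we require `a ≠ c`. -/
def NBRel {α : Type*} : α × α → α × α → Prop := fun s t => s.1 ≠ t.2

/-- A walk is non-backtracking. -/
def IsNB {G : SimpleGraph V} {u x : V} (p : G.Walk u x) : Prop :=
  List.Chain' NBRel (p.darts.map SimpleGraph.Dart.toProd)

lemma isNB_nil {G : SimpleGraph V} {u : V} : IsNB (SimpleGraph.Walk.nil : G.Walk u u) := by
  simp [IsNB, List.Chain']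

lemma IsNB.tail' {G : SimpleGraph V} {u y x : V} {h : G.Adj u y} {p : G.Walk y x}
    (hnb : IsNB (SimpleGraph.Walk.cons h p)) : IsNB p := by
  have := hnb
  simp only [IsNB, SimpleGraph.Walk.darts_cons, List.map_cons] at this
  exact this.tail

lemma darts_toProd_transfer {G G' : SimpleGraph V} {u x : V} (p : G.Walk u x)
    (h : ∀ e ∈ p.edges, e ∈ G'.edgeSet) :
    (p.transfer G' h).darts.map SimpleGraph.Dart.toProd
      = p.darts.map SimpleGraph.Dart.toProd := by
  induction p with
  | nil => rfl
  | cons h' q ih => exact congrArg (List.cons _) (ih _)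

lemma isNB_transfer {G G' : SimpleGraph V} {u x : V} (p : G.Walk u x)
    (h : ∀ e ∈ p.edges, e ∈ G'.edgeSet) :
    IsNB (p.transfer G' h) ↔ IsNB p := by
  unfold IsNB
  rw [darts_toProd_transfer]

/-! ### AM-GM for logarithms -/

lemma log_card_add_avg_le_log_sum {ι : Type*} (s : Finset ι) (hs : s.Nonempty) (z : ι → ℝ)
    (hz : ∀ i ∈ s, 1 ≤ z i) :
    Real.log s.card + (∑ i ∈ s, Real.log (z i)) / s.card ≤ Real.log (∑ i ∈ s, z i) := by
  have hn : (0:ℝ) < (s.card : ℝ) := by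
    exact_mod_cast Finset.card_pos.mpr hs
  have hzpos : ∀ i ∈ s, (0:ℝ) < z i := fun i hi => lt_of_lt_of_le one_pos (hz i hi)
  have hgm := Real.geom_mean_le_arith_mean_weighted s (fun _ => ((s.card:ℝ))⁻¹) z
      (fun i _ => by positivity)
      (by simp [Finset.sum_const, mul_comm]; field_simp)
      (fun i hi => (hzpos i hi).le)
  have hprodpos : (0:ℝ) < ∏ i ∈ s, z i ^ ((s.card:ℝ))⁻¹ := by
    apply Finset.prod_pos
    intro i hi
    exact Real.rpow_pos_of_pos (hzpos i hi) _
  have hlog1 : Real.log (∏ i ∈ s, z i ^ ((s.card:ℝ))⁻¹)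
      = (∑ i ∈ s, Real.log (z i)) / s.card := by
    rw [Real.log_prod (fun i hi => (Real.rpow_pos_of_pos (hzpos i hi) _).ne')]
    rw [Finset.sum_div]
    refine Finset.sum_congr rfl fun i hi => ?_
    rw [Real.log_rpow (hzpos i hi)]
    ring
  have hsum : ∑ i ∈ s, ((s.card:ℝ))⁻¹ * z i = (∑ i ∈ s, z i) / s.card := by
    rw [← Finset.mul_sum]
    ring
  have hle := Real.log_le_log hprodpos hgm
  rw [hlog1, hsum] at hle
  have hsumpos : (0:ℝ) < ∑ i ∈ s, z i := by
    have : (s.card : ℝ) ≤ ∑ i ∈ s, z i := by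
      simpa using Finset.sum_le_sum hz
    linarith
  rw [Real.log_div hsumpos.ne' hn.ne'] at hle
  linarith

/-! ### The numeric per-degree inequality -/

lemma deg_log_ineq {n : ℕ} (hn : 2 ≤ n) :
    3 * Real.log 2 * ((n:ℝ) - 2) ≤ (n:ℝ) * Real.log ((n:ℝ) - 1) := by
  have l2 : (0:ℝ) < Real.log 2 := Real.log_pos (by norm_num)
  rcases le_or_gt 9 n with h9 | h9
  · have h8 : (8:ℝ) ≤ (n:ℝ) - 1 := by
      have : (9:ℝ) ≤ (n:ℝ) := by exact_mod_cast h9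
      linarith
    have hl : Real.log 8 ≤ Real.log ((n:ℝ) - 1) := Real.log_le_log (by norm_num) h8
    have l8 : Real.log 8 = 3 * Real.log 2 := by
      rw [show (8:ℝ) = 2 ^ (3:ℕ) by norm_num, Real.log_pow]
      push_cast; ring
    have hn9 : (9:ℝ) ≤ (n:ℝ) := by exact_mod_cast h9
    nlinarith
  · have key : ∀ (a b : ℝ) (k m : ℕ), (0:ℝ) < a → a^k ≤ b^m →
        (k:ℝ) * Real.log a ≤ (m:ℝ) * Real.log b := by
      intro a b k m ha h
      have := Real.log_le_log (pow_pos ha k) h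
      rwa [Real.log_pow, Real.log_pow] at this
    interval_cases n
    · push_cast; norm_num
    · push_cast; norm_num
    · have h := key 2 3 6 4 (by norm_num) (by norm_num)
      push_cast at h ⊢; norm_num; nlinarith [h]
    · have h := key 2 4 9 5 (by norm_num) (by norm_num)
      push_cast at h ⊢; norm_num; nlinarith [h]
    · have h := key 2 5 12 6 (by norm_num) (by norm_num)
      push_cast at h ⊢; norm_num; nlinarith [h]
    · have h := key 2 6 15 7 (by norm_num) (by norm_num)
      push_cast at h ⊢; norm_num; nlinarith [h]
    · have h := key 2 7 18 8 (by norm_num) (by norm_num)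
      push_cast at h ⊢; norm_num; nlinarith [h]


/-! ### Balls, distances, and edge counting -/

/-- The finset of edges within `S`. -/
noncomputable def inEdges (G : SimpleGraph V) (S : Finset V) : Finset (Sym2 V) :=
  G.edgeFinset.filter (fun e => ∀ x ∈ e, x ∈ S)

lemma edgesWithin_eq_card (G : SimpleGraph V) (S : Finset V) :
    edgesWithin G S = (inEdges G S).card := rfl

lemma mem_ball_iff {G : SimpleGraph V} {u x : V} {r : ℕ} :
    x ∈ ball G u r ↔ ∃ p : G.Walk u x, p.length ≤ r := by
  simp [ball]

lemma self_mem_ball {G : SimpleGraph V} {u : V} {r : ℕ} : u ∈ ball G u r :=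
  mem_ball_iff.mpr ⟨SimpleGraph.Walk.nil, by simp⟩

lemma reachable_of_mem_ball {G : SimpleGraph V} {u x : V} {r : ℕ} (h : x ∈ ball G u r) :
    G.Reachable u x := by
  obtain ⟨p, -⟩ := mem_ball_iff.mp h
  exact ⟨p⟩

lemma dist_le_of_mem_ball {G : SimpleGraph V} {u x : V} {r : ℕ} (h : x ∈ ball G u r) :
    G.dist u x ≤ r := by
  obtain ⟨p, hp⟩ := mem_ball_iff.mp h
  exact le_trans (SimpleGraph.dist_le p) hp

lemma mem_ball_of_dist {G : SimpleGraph V} {u x : V} {r : ℕ} (hre : G.Reachable u x)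
    (h : G.dist u x ≤ r) : x ∈ ball G u r := by
  obtain ⟨p, hp⟩ := hre.exists_walk_length_eq_dist
  exact mem_ball_iff.mpr ⟨p, by omega⟩

lemma support_subset_ball {G : SimpleGraph V} {u x : V} {r : ℕ} (p : G.Walk u x)
    (hp : p.length ≤ r) {y : V} (hy : y ∈ p.support) : y ∈ ball G u r := by
  refine mem_ball_iff.mpr ⟨p.takeUntil y hy, ?_⟩
  exact le_trans (SimpleGraph.Walk.length_takeUntil_le p hy) hp

lemma ball_mono_graph {G G' : SimpleGraph V} (h : G ≤ G') (u : V) (r : ℕ) :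
    ball G u r ⊆ ball G' u r := by
  intro x hx
  obtain ⟨p, hp⟩ := mem_ball_iff.mp hx
  refine mem_ball_iff.mpr ⟨p.map (SimpleGraph.Hom.ofLE h), ?_⟩
  rwa [SimpleGraph.Walk.length_map]

/-- From a vertex reachable from `u` and distinct from it, pick a neighbour strictly
closer to `u`. -/
lemma exists_adj_dist_lt (G : SimpleGraph V) {u w : V} (h : G.Reachable u w) (hw : w ≠ u) :
    ∃ y, G.Adj y w ∧ G.dist u y < G.dist u w := by
  obtain ⟨p, hp⟩ := h.exists_walk_length_eq_dist
  have hlen : p.length ≠ 0 := by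
    intro h0
    exact hw (SimpleGraph.Walk.eq_of_length_eq_zero h0).symm
  set q := p.reverse with hq
  have hqlen : q.length = p.length := SimpleGraph.Walk.length_reverse p
  cases hq' : q with
  | nil =>
    rw [hq'] at hqlen
    simp at hqlen
    omega
  | @cons _ y _ hadj t =>
    refine ⟨y, hadj.symm, ?_⟩
    have : G.dist u y ≤ t.reverse.length := SimpleGraph.dist_le t.reverse
    rw [SimpleGraph.Walk.length_reverse] at this
    have ht : t.length + 1 = p.length := by
      rw [← hqlen, hq']
      simp
    omega

/-- Pred-edge injection: a set of vertices reachable from `u` needs at least `|X| - 1` edges. -/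
lemma card_le_edges_add_one (G : SimpleGraph V) (u : V) (X : Finset V)
    (hX : ∀ x ∈ X, G.Reachable u x) : X.card ≤ G.edgeFinset.card + 1 := by
  classical
  have key : ∀ w ∈ X.erase u, ∃ e ∈ G.edgeFinset, ∃ y, e = s(y, w) ∧ G.dist u y < G.dist u w := by
    intro w hw
    have hwX := Finset.mem_of_mem_erase hw
    have hwne : w ≠ u := Finset.ne_of_mem_erase hw
    obtain ⟨y, hadj, hlt⟩ := exists_adj_dist_lt G (hX w hwX) hwne
    exact ⟨s(y, w), by simpa [SimpleGraph.mem_edgeFinset] using hadj, y, rfl, hlt⟩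
  choose f hf y hy hlt using key
  have hinj : Set.InjOn (fun w => if h : w ∈ X.erase u then f w h else s(u,u)) ↑(X.erase u) := by
    intro w₁ h₁ w₂ h₂ heq
    rw [Finset.mem_coe] at h₁ h₂
    simp only [dif_pos h₁, dif_pos h₂] at heq
    have e₁ := hy w₁ h₁
    have e₂ := hy w₂ h₂
    rw [e₁, e₂] at heq
    rw [Sym2.eq_iff] at heq
    rcases heq with ⟨-, h⟩ | ⟨h1, h2⟩
    · exact h
    · exfalso
      have l1 := hlt w₁ h₁
      have l2 := hlt w₂ h₂
      rw [h1] at l1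
      rw [← h2] at l2
      omega
  have hcard : (X.erase u).card ≤ G.edgeFinset.card := by
    apply Finset.card_le_card_of_injOn _ _ hinj
    intro w hw
    simp only [dif_pos hw]
    rw [Finset.mem_coe, dif_pos (Finset.mem_coe.mp hw)]
    exact hf w hw
  have := Finset.card_erase_add_one (a := u) (s := X)
  rcases Finset.decidableMem u X with h | h
  · have : (X.erase u).card = X.card := by
      rw [Finset.erase_eq_of_notMem h]
    omega
  · have hc := Finset.card_erase_of_mem h
    omega

/-- **Subset lemma**: if the `r`-ball about `u` spans at most `|B|` edges, then any subset
`T ∋ u` of the ball spans at most `|T|` edges. -/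
lemma edgesWithin_le_of_subset_ball (G : SimpleGraph V) {u : V} {r : ℕ}
    (hball : edgesWithin G (ball G u r) ≤ (ball G u r).card)
    {T : Finset V} (hT : T ⊆ ball G u r) (hu : u ∈ T) :
    edgesWithin G T ≤ T.card := by
  classical
  set B := ball G u r with hB
  have key : ∀ w ∈ B \ T, ∃ e ∈ inEdges G B \ inEdges G T, ∃ y,
      e = s(y, w) ∧ G.dist u y < G.dist u w := by
    intro w hw
    have hwB : w ∈ B := (Finset.mem_sdiff.mp hw).1
    have hwT : w ∉ T := (Finset.mem_sdiff.mp hw).2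
    have hwne : w ≠ u := fun h => hwT (h ▸ hu)
    obtain ⟨y, hadj, hlt⟩ := exists_adj_dist_lt G (reachable_of_mem_ball hwB) hwne
    have hyB : y ∈ B := by
      refine mem_ball_of_dist ?_ ?_
      · exact ((reachable_of_mem_ball hwB).trans ⟨hadj.symm.toWalk⟩).symm.symm
      · exact le_trans (le_of_lt hlt) (dist_le_of_mem_ball hwB)
    refine ⟨s(y, w), ?_, y, rfl, hlt⟩
    rw [Finset.mem_sdiff]
    constructor
    · rw [inEdges, Finset.mem_filter]
      refine ⟨by simpa [SimpleGraph.mem_edgeFinset] using hadj, ?_⟩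
      intro x hx
      rw [Sym2.mem_iff] at hx
      rcases hx with rfl | rfl
      · exact hyB
      · exact hwB
    · rw [inEdges, Finset.mem_filter]
      push_neg
      intro _
      exact ⟨w, by simp, hwT⟩
  choose f hf y hy hlt using key
  have hinj : Set.InjOn (fun w => if h : w ∈ B \ T then f w h else s(u,u)) ↑(B \ T) := by
    intro w₁ h₁ w₂ h₂ heq
    rw [Finset.mem_coe] at h₁ h₂
    simp only [dif_pos h₁, dif_pos h₂] at heq
    have e₁ := hy w₁ h₁
    have e₂ := hy w₂ h₂
    rw [e₁, e₂] at heq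
    rw [Sym2.eq_iff] at heq
    rcases heq with ⟨-, h⟩ | ⟨h1, h2⟩
    · exact h
    · exfalso
      have l1 := hlt w₁ h₁
      have l2 := hlt w₂ h₂
      rw [h1] at l1
      rw [← h2] at l2
      omega
  have hcard : (B \ T).card ≤ (inEdges G B \ inEdges G T).card := by
    apply Finset.card_le_card_of_injOn _ _ hinj
    intro w hw
    simp only [dif_pos hw]
    rw [Finset.mem_coe, dif_pos (Finset.mem_coe.mp hw)]
    exact hf w hw
  have hsub : inEdges G T ⊆ inEdges G B := by
    intro e he
    simp only [inEdges, Finset.mem_filter] at he ⊢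
    exact ⟨he.1, fun x hx => hT (he.2 x hx)⟩
  have h1 : (inEdges G B \ inEdges G T).card = (inEdges G B).card - (inEdges G T).card :=
    Finset.card_sdiff_of_subset hsub
  have h2 : (B \ T).card = B.card - T.card := Finset.card_sdiff_of_subset hT
  have h3 : (inEdges G T).card ≤ (inEdges G B).card := Finset.card_le_card hsub
  have h4 : T.card ≤ B.card := Finset.card_le_card hT
  rw [edgesWithin_eq_card] at *
  omega


/-! ### Restriction of a graph to a vertex set -/

/-- The subgraph of `G` induced on `S` (as a graph on `V`). -/
def restrictG (G : SimpleGraph V) (S : Finset V) : SimpleGraph V where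
  Adj a b := G.Adj a b ∧ a ∈ S ∧ b ∈ S
  symm := ⟨fun a b h => ⟨h.1.symm, h.2.2, h.2.1⟩⟩
  loopless := ⟨fun a h => G.loopless.irrefl a h.1⟩

lemma restrictG_le (G : SimpleGraph V) (S : Finset V) : restrictG G S ≤ G :=
  fun _ _ h => h.1

lemma restrictG_edgeFinset (G : SimpleGraph V) (S : Finset V) :
    (restrictG G S).edgeFinset = inEdges G S := by
  ext e
  induction e with
  | _ a b =>
    simp only [SimpleGraph.mem_edgeFinset, inEdges, Finset.mem_filter,
      SimpleGraph.mem_edgeSet, Sym2.mem_iff]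
    constructor
    · rintro ⟨h, ha, hb⟩
      refine ⟨by simpa [SimpleGraph.mem_edgeFinset] using h, ?_⟩
      rintro x (rfl | rfl) <;> assumption
    · rintro ⟨h, hall⟩
      exact ⟨by simpa [SimpleGraph.mem_edgeFinset] using h, hall a (Or.inl rfl),
        hall b (Or.inr rfl)⟩

lemma restrictG_neighborFinset (G : SimpleGraph V) (S : Finset V) {x : V} (hx : x ∈ S) :
    (restrictG G S).neighborFinset x = S ∩ G.neighborFinset x := by
  ext y
  simp only [SimpleGraph.mem_neighborFinset, Finset.mem_inter]
  constructor
  · rintro ⟨h, -, hy⟩; exact ⟨hy, h⟩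
  · rintro ⟨hy, h⟩; exact ⟨h, hx, hy⟩

lemma restrictG_degree_zero (G : SimpleGraph V) (S : Finset V) {x : V} (hx : x ∉ S) :
    (restrictG G S).degree x = 0 := by
  rw [← SimpleGraph.card_neighborFinset_eq_degree]
  rw [Finset.card_eq_zero]
  ext y
  simp only [SimpleGraph.mem_neighborFinset, Finset.notMem_empty, iff_false]
  rintro ⟨-, h, -⟩
  exact hx h

/-! ### Peeling to the 2-core -/

lemma peel_aux (H : SimpleGraph V) :
    ∀ (n : ℕ) (S : Finset V), S.card ≤ n →
      H.edgeFinset.card + S.card ≤ edgesWithin H S + Fintype.card V →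
      ∃ T : Finset V, (∀ x ∈ T, 2 ≤ (T ∩ H.neighborFinset x).card) ∧
        H.edgeFinset.card + T.card ≤ edgesWithin H T + Fintype.card V := by
  intro n
  induction n with
  | zero =>
    intro S hS hineq
    refine ⟨S, ?_, hineq⟩
    intro x hx
    rw [Finset.card_eq_zero.mp (Nat.le_zero.mp hS)] at hx
    simp at hx
  | succ n ih =>
    intro S hS hineq
    by_cases hgood : ∀ x ∈ S, 2 ≤ (S ∩ H.neighborFinset x).card
    · exact ⟨S, hgood, hineq⟩
    · push_neg at hgood
      obtain ⟨x, hxS, hxdeg⟩ := hgood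
      have hxdeg' : (S ∩ H.neighborFinset x).card ≤ 1 := by omega
      set S' := S.erase x with hS'
      have hcard : S'.card + 1 = S.card := Finset.card_erase_add_one hxS
      -- the edges within S but not within S' all contain x, with distinct other endpoints
      have hdrop : edgesWithin H S ≤ edgesWithin H S' + 1 := by
        rw [edgesWithin_eq_card, edgesWithin_eq_card]
        have hsub : inEdges H S' ⊆ inEdges H S := by
          intro e he
          simp only [inEdges, Finset.mem_filter] at he ⊢
          exact ⟨he.1, fun z hz => Finset.mem_of_mem_erase (he.2 z hz)⟩
        have key : ∀ e ∈ inEdges H S \ inEdges H S', ∃ hx : x ∈ e,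
            Sym2.Mem.other hx ∈ S ∩ H.neighborFinset x := by
          intro e he
          rw [Finset.mem_sdiff] at he
          obtain ⟨heS, heS'⟩ := he
          simp only [inEdges, Finset.mem_filter] at heS heS'
          have hxe : x ∈ e := by
            by_contra hxe
            refine heS' ⟨heS.1, fun z hz => ?_⟩
            refine Finset.mem_erase.mpr ⟨?_, heS.2 z hz⟩
            rintro rfl; exact hxe hz
          refine ⟨hxe, ?_⟩
          have hother := Sym2.other_mem hxe
          have hspec := Sym2.other_spec hxe
          rw [Finset.mem_inter]
          refine ⟨heS.2 _ hother, ?_⟩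
          rw [SimpleGraph.mem_neighborFinset]
          have : e ∈ H.edgeSet := by simpa [SimpleGraph.mem_edgeFinset] using heS.1
          rw [← hspec] at this
          exact this
        choose hxmem hother using key
        have hinj : Set.InjOn
            (fun e => if h : e ∈ inEdges H S \ inEdges H S' then Sym2.Mem.other (hxmem e h) else x)
            ↑(inEdges H S \ inEdges H S') := by
          intro e₁ h₁ e₂ h₂ heq
          rw [Finset.mem_coe] at h₁ h₂
          simp only [dif_pos h₁, dif_pos h₂] at heq
          have s₁ := Sym2.other_spec (hxmem e₁ h₁)
          have s₂ := Sym2.other_spec (hxmem e₂ h₂)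
          rw [← s₁, ← s₂, heq]
        have hcard2 : (inEdges H S \ inEdges H S').card ≤ (S ∩ H.neighborFinset x).card := by
          apply Finset.card_le_card_of_injOn _ _ hinj
          intro e he
          simp only [dif_pos he]
          rw [Finset.mem_coe, dif_pos (Finset.mem_coe.mp he)]
          exact hother e he
        have := Finset.card_sdiff_of_subset hsub
        have := Finset.card_le_card hsub
        omega
      refine ih S' (by omega) ?_
      omega

/-! ### Reachability is preserved by deleting a non-bridge edge -/

lemma reachable_deleteEdges (G : SimpleGraph V) {a b : V}
    (hre : (G.deleteEdges {s(a,b)}).Reachable a b) {x y : V} (h : G.Reachable x y) :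
    (G.deleteEdges {s(a,b)}).Reachable x y := by
  obtain ⟨p⟩ := h
  induction p with
  | nil => exact SimpleGraph.Reachable.refl _
  | @cons c d e hadj p ih =>
    refine SimpleGraph.Reachable.trans ?_ ih
    by_cases he : s(c, d) = s(a, b)
    · rw [Sym2.eq_iff] at he
      rcases he with ⟨rfl, rfl⟩ | ⟨rfl, rfl⟩
      · exact hre
      · exact hre.symm
    · exact SimpleGraph.Adj.reachable (by simp [SimpleGraph.deleteEdges_adj, hadj, he])

lemma edgeFinset_deleteEdges (G : SimpleGraph V) (e : Sym2 V) (he : e ∈ G.edgeFinset) :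
    (G.deleteEdges {e}).edgeFinset = G.edgeFinset.erase e := by
  ext f
  simp only [SimpleGraph.mem_edgeFinset, Finset.mem_erase, SimpleGraph.edgeSet_deleteEdges]
  simp only [Set.mem_diff, Set.mem_singleton_iff]
  tauto

/-- Dichotomy: a graph whose edges lie within a set `X` of vertices all reachable from `u`,
with at most `|X|` edges, is unicyclic: either acyclic, or acyclic after deleting one edge. -/
lemma unicyclic_dichotomy (G : SimpleGraph V) (u : V) (X : Finset V)
    (hreach : ∀ x ∈ X, G.Reachable u x)
    (hedge : ∀ e ∈ G.edgeFinset, ∀ x ∈ e, x ∈ X)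
    (hcount : G.edgeFinset.card ≤ X.card) :
    G.IsAcyclic ∨ ∃ e ∈ G.edgeSet, (G.deleteEdges {e}).IsAcyclic := by
  by_cases hac : G.IsAcyclic
  · exact Or.inl hac
  · right
    rw [SimpleGraph.isAcyclic_iff_forall_edge_isBridge] at hac
    push_neg at hac
    obtain ⟨e₁, he₁, hnb₁⟩ := hac
    refine ⟨e₁, he₁, ?_⟩
    by_contra hac₂
    -- get a second non-bridge edge in G.deleteEdges {e₁}
    set G₁ := G.deleteEdges {e₁} with hG₁
    rw [SimpleGraph.isAcyclic_iff_forall_edge_isBridge] at hac₂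
    push_neg at hac₂
    obtain ⟨e₂, he₂, hnb₂⟩ := hac₂
    set G₂ := G₁.deleteEdges {e₂} with hG₂
    -- reachability of X from u survives in G₂
    have hre₁ : ∀ x y, G.Reachable x y → G₁.Reachable x y := by
      induction e₁ with
      | _ a b =>
        intro x y h
        apply reachable_deleteEdges
        · have := hnb₁
          rw [SimpleGraph.isBridge_iff] at this
          push_neg at this
          have hadj : G.Adj a b := by rwa [← SimpleGraph.mem_edgeSet]
          exact this
        · exact h
    have hre₂ : ∀ x y, G₁.Reachable x y → G₂.Reachable x y := by
      induction e₂ with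
      | _ a b =>
        intro x y h
        apply reachable_deleteEdges
        · have := hnb₂
          rw [SimpleGraph.isBridge_iff] at this
          push_neg at this
          have hadj : G₁.Adj a b := by rwa [← SimpleGraph.mem_edgeSet]
          exact this
        · exact h
    have hreach₂ : ∀ x ∈ X, G₂.Reachable u x := fun x hx => hre₂ _ _ (hre₁ _ _ (hreach x hx))
    have hcount₂ := card_le_edges_add_one G₂ u X hreach₂
    have hc₁ : G₁.edgeFinset.card + 1 = G.edgeFinset.card := by
      rw [edgeFinset_deleteEdges G e₁ (by rwa [SimpleGraph.mem_edgeFinset])]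
      exact Finset.card_erase_add_one (by rwa [SimpleGraph.mem_edgeFinset])
    have hc₂ : G₂.edgeFinset.card + 1 = G₁.edgeFinset.card := by
      have h := edgeFinset_deleteEdges G₁ e₂ (by convert SimpleGraph.mem_edgeFinset.mpr he₂)
      rw [← Finset.card_erase_add_one (SimpleGraph.mem_edgeFinset.mpr he₂)]
      congr 2
      convert h using 2
      ext x; simp
    have hcount₂' : X.card ≤ G₂.edgeFinset.card + 1 := by
      convert hcount₂ using 3
      ext x; simp
    -- but X is covered by u's component needing ≥ |X| - 1 edges: contradiction
    omega


/-! ### Non-backtracking walks in unicyclic graphs -/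

section Cap

variable {G₀ : SimpleGraph V}

/-- The first dart of a walk crossing the special edge `estar`. -/
def firstCross (estar : Sym2 V) {s x : V} (p : G₀.Walk s x) : Option G₀.Dart :=
  p.darts.find? (fun d => decide (d.edge = estar))

lemma avoid_of_firstCross_none {estar : Sym2 V} {s x : V} {p : G₀.Walk s x}
    (h : firstCross estar p = none) : ∀ e ∈ p.edges, e ≠ estar := by
  intro e he
  have h' := List.find?_eq_none.mp h
  simp only [SimpleGraph.Walk.edges, List.mem_map] at he
  obtain ⟨d, hd, rfl⟩ := he
  simpa using h' d hd

lemma path_eq_cons_nil_of_edge_start {F : SimpleGraph V} {y u : V} (p : F.Walk y u)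
    (hp : p.IsPath) (hyu : y ≠ u) (he : s(y, u) ∈ p.edges) :
    ∃ h : F.Adj y u, p = SimpleGraph.Walk.cons h SimpleGraph.Walk.nil := by
  cases p with
  | nil => simp at he
  | @cons _ z _ h' t =>
    rw [SimpleGraph.Walk.edges_cons, List.mem_cons] at he
    rcases he with he | he
    · have hz : u = z := Sym2.congr_right.mp he
      subst hz
      have ht : t = SimpleGraph.Walk.nil := by
        rw [← SimpleGraph.Walk.isPath_iff_eq_nil]
        exact (SimpleGraph.Walk.cons_isPath_iff h' t).mp hp |>.1
      exact ⟨h', by rw [ht]⟩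
    · exfalso
      have hy := SimpleGraph.Walk.fst_mem_support_of_mem_edges t he
      have := (SimpleGraph.Walk.cons_isPath_iff h' t).mp hp
      exact this.2 hy

lemma isPath_of_isNB_acyclic {F : SimpleGraph V} (hF : F.IsAcyclic) :
    ∀ {u x : V} (p : F.Walk u x), IsNB p → p.IsPath := by
  intro u x p
  induction p with
  | nil => intro _; simp
  | @cons u y x h q ih =>
    intro hnb
    have hq : q.IsPath := ih hnb.tail'
    rw [SimpleGraph.Walk.cons_isPath_iff]
    refine ⟨hq, fun hu => ?_⟩
    have hq₁p : (q.takeUntil u hu).IsPath := hq.takeUntil hu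
    have hcyc := hF (SimpleGraph.Walk.cons h (q.takeUntil u hu))
    rw [SimpleGraph.Walk.cons_isCycle_iff] at hcyc
    push_neg at hcyc
    have hedge : s(u, y) ∈ (q.takeUntil u hu).edges := hcyc hq₁p
    have hyu : y ≠ u := fun hyx => F.loopless.irrefl u (hyx ▸ h)
    have hedge' : s(y, u) ∈ (q.takeUntil u hu).edges := by rwa [Sym2.eq_swap] at hedge
    obtain ⟨hadj, hq₁eq⟩ := path_eq_cons_nil_of_edge_start (q.takeUntil u hu) hq₁p hyu hedge'
    -- then the first dart of q is (y, u), contradicting non-backtracking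
    have hqdarts : q.darts = (q.takeUntil u hu).darts ++ (q.dropUntil u hu).darts := by
      conv_lhs => rw [← SimpleGraph.Walk.take_spec q hu]
      rw [SimpleGraph.Walk.darts_append]
    rw [hq₁eq] at hqdarts
    simp only [SimpleGraph.Walk.darts_cons, SimpleGraph.Walk.darts_nil] at hqdarts
    have hnb' := hnb
    simp only [IsNB, SimpleGraph.Walk.darts_cons, List.map_cons, hqdarts] at hnb'
    rw [List.Chain', List.isChain_cons] at hnb'
    have := hnb'.1 (⟨(y, u), hadj⟩ : F.Dart).toProd (by simp)
    exact this rfl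

lemma path_length_eq_dist {F : SimpleGraph V} (hF : F.IsAcyclic) {a b : V} (P : F.Walk a b)
    (hP : P.IsPath) : P.length = F.dist a b := by
  have h1 : F.dist a b ≤ P.length := SimpleGraph.dist_le P
  obtain ⟨w, hw⟩ := (SimpleGraph.Reachable.exists_walk_length_eq_dist ⟨P⟩)
  have hbp : w.bypass = P :=
    congrArg Subtype.val (hF.path_unique ⟨w.bypass, SimpleGraph.Walk.bypass_isPath w⟩ ⟨P, hP⟩)
  have h2 : P.length ≤ F.dist a b := by
    rw [← hbp, ← hw]
    exact SimpleGraph.Walk.length_bypass_le w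
  omega

variable {estar : Sym2 V}

lemma edges_mem_deleteEdges {s x : V} (p : G₀.Walk s x) (hpe : ∀ e ∈ p.edges, e ≠ estar) :
    ∀ e ∈ p.edges, e ∈ (G₀.deleteEdges {estar}).edgeSet := by
  intro e he
  rw [SimpleGraph.edgeSet_deleteEdges]
  exact ⟨p.edges_subset_edgeSet he, by simpa using hpe e he⟩

lemma nb_unique_avoid (hF : (G₀.deleteEdges {estar}).IsAcyclic) {s x : V}
    (p q : G₀.Walk s x) (hp : IsNB p) (hq : IsNB q)
    (hpe : ∀ e ∈ p.edges, e ≠ estar) (hqe : ∀ e ∈ q.edges, e ≠ estar) : p = q := by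
  set F := G₀.deleteEdges {estar} with hFdef
  have hp' := edges_mem_deleteEdges p hpe
  have hq' := edges_mem_deleteEdges q hqe
  have hppath : (p.transfer F hp').IsPath :=
    isPath_of_isNB_acyclic hF _ ((isNB_transfer p hp').mpr hp)
  have hqpath : (q.transfer F hq').IsPath :=
    isPath_of_isNB_acyclic hF _ ((isNB_transfer q hq').mpr hq)
  have heq : p.transfer F hp' = q.transfer F hq' :=
    congrArg Subtype.val (hF.path_unique ⟨_, hppath⟩ ⟨_, hqpath⟩)
  have hback : ((p.transfer F hp').transfer G₀ (by
      rw [SimpleGraph.Walk.edges_transfer]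
      exact p.edges_subset_edgeSet)) = ((q.transfer F hq').transfer G₀ (by
      rw [SimpleGraph.Walk.edges_transfer]
      exact q.edges_subset_edgeSet)) := by
    congr 1
  rw [SimpleGraph.Walk.transfer_transfer, SimpleGraph.Walk.transfer_transfer] at hback
  rwa [SimpleGraph.Walk.transfer_self, SimpleGraph.Walk.transfer_self] at hback

lemma avoid_length_eq_dist (hF : (G₀.deleteEdges {estar}).IsAcyclic) {a b : V}
    (P : G₀.Walk a b) (hnb : IsNB P) (hav : ∀ e ∈ P.edges, e ≠ estar) :
    P.length = (G₀.deleteEdges {estar}).dist a b := by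
  have hP' := edges_mem_deleteEdges P hav
  have := path_length_eq_dist hF (P.transfer _ hP')
    (isPath_of_isNB_acyclic hF _ ((isNB_transfer P hP').mpr hnb))
  rwa [SimpleGraph.Walk.length_transfer] at this

lemma exists_decomp : ∀ {s x : V} (p : G₀.Walk s x), IsNB p → ∀ d : G₀.Dart,
    firstCross estar p = some d →
    ∃ (P : G₀.Walk s d.fst) (p' : G₀.Walk d.snd x),
      p = P.append (SimpleGraph.Walk.cons d.adj p') ∧ (∀ e ∈ P.edges, e ≠ estar) ∧
        IsNB P ∧ IsNB (SimpleGraph.Walk.cons d.adj p') ∧ d.edge = estar := by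
  intro s x p
  induction p with
  | nil =>
    intro _ d hd
    simp [firstCross] at hd
  | @cons s y x h t ih =>
    intro hnb d hd
    by_cases hcr : (SimpleGraph.Dart.mk (s, y) h : G₀.Dart).edge = estar
    · have hd' : d = SimpleGraph.Dart.mk (s, y) h := by
        rw [firstCross, SimpleGraph.Walk.darts_cons,
          List.find?_cons_of_pos (p := fun d : G₀.Dart => decide (d.edge = estar))
          (a := SimpleGraph.Dart.mk (s, y) h) (decide_eq_true hcr)] at hd
        exact (Option.some_inj.mp hd).symm
      subst hd'
      refine ⟨SimpleGraph.Walk.nil, t, ?_, by simp, isNB_nil, hnb, hcr⟩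
      simp
    · rw [firstCross, SimpleGraph.Walk.darts_cons,
        List.find?_cons_of_neg (p := fun d : G₀.Dart => decide (d.edge = estar))
          (a := SimpleGraph.Dart.mk (s, y) h) (fun h' => hcr (of_decide_eq_true h'))] at hd
      obtain ⟨P', p', heq, hav, hPnb, hnb', hde⟩ := ih hnb.tail' d hd
      refine ⟨SimpleGraph.Walk.cons h P', p', ?_, ?_, ?_, hnb', hde⟩
      · rw [SimpleGraph.Walk.cons_append, heq]
      · intro e he
        rw [SimpleGraph.Walk.edges_cons, List.mem_cons] at he
        rcases he with rfl | he
        · simpa using hcr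
        · exact hav e he
      · -- IsNB (cons h P') from IsNB (cons h t) by prefix
        have hdt : t.darts = P'.darts ++ (d :: p'.darts) := by
          rw [heq, SimpleGraph.Walk.darts_append, SimpleGraph.Walk.darts_cons]
        have hnbc := hnb
        simp only [IsNB, SimpleGraph.Walk.darts_cons, List.map_cons, hdt, List.map_append] at hnbc ⊢
        exact hnbc.prefix ⟨List.map SimpleGraph.Dart.toProd (d :: p'.darts), by simp⟩

lemma suffix_firstCross (hF : (G₀.deleteEdges {estar}).IsAcyclic) {x : V} (d : G₀.Dart)
    (p' : G₀.Walk d.snd x) (hnb : IsNB (SimpleGraph.Walk.cons d.adj p')) (hde : d.edge = estar) :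
    firstCross estar p' = none ∨ firstCross estar p' = some d := by
  cases hfc : firstCross estar p' with
  | none => exact Or.inl rfl
  | some d' =>
    right
    have hd'e : d'.edge = estar := by
      have := List.find?_some hfc
      simpa using this
    have hdd : d' = d ∨ d' = d.symm := by
      rw [← SimpleGraph.dart_edge_eq_iff]
      rw [hd'e, hde]
    rcases hdd with rfl | rfl
    · rfl
    · exfalso
      obtain ⟨P', p'', heq, havoid, hPnb, hnb'', -⟩ := exists_decomp p' hnb.tail' d.symm hfc
      have hP'nil : P' = SimpleGraph.Walk.nil :=
        nb_unique_avoid hF P' SimpleGraph.Walk.nil hPnb isNB_nil havoid (fun e he => by cases he)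
      rw [hP'nil] at heq
      change p' = SimpleGraph.Walk.cons _ p'' at heq
      rw [heq] at hnb
      have hnbb := hnb
      simp only [IsNB, SimpleGraph.Walk.darts_cons, List.map_cons] at hnbb
      rw [List.Chain', List.isChain_cons] at hnbb
      exact hnbb.1 _ rfl rfl

lemma len_formula (hF : (G₀.deleteEdges {estar}).IsAcyclic) :
    ∀ (L : ℕ) {z x : V} (w : G₀.Walk z x), w.length = L → IsNB w →
    (firstCross estar w = none → w.length = (G₀.deleteEdges {estar}).dist z x) ∧
    (∀ d, firstCross estar w = some d → ∃ m : ℕ,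
      w.length = (G₀.deleteEdges {estar}).dist z d.fst + 1
        + m * ((G₀.deleteEdges {estar}).dist d.snd d.fst + 1)
        + (G₀.deleteEdges {estar}).dist d.snd x) := by
  intro L
  induction L using Nat.strong_induction_on with
  | _ L ih =>
    intro z x w hlen hnb
    constructor
    · intro hnone
      exact avoid_length_eq_dist hF w hnb (avoid_of_firstCross_none hnone)
    · intro d hsome
      obtain ⟨P, p', heq, havoid, hPnb, hcons, hde⟩ := exists_decomp w hnb d hsome
      have hPlen : P.length = (G₀.deleteEdges {estar}).dist z d.fst :=
        avoid_length_eq_dist hF P hPnb havoid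
      have hwlen : w.length = P.length + p'.length + 1 := by
        rw [heq, SimpleGraph.Walk.length_append, SimpleGraph.Walk.length_cons]
        omega
      have hlt : p'.length < L := by omega
      rcases suffix_firstCross hF d p' hcons hde with hn | hs
      · refine ⟨0, ?_⟩
        have := (ih p'.length hlt p' rfl hcons.tail').1 hn
        omega
      · obtain ⟨m, hm⟩ := (ih p'.length hlt p' rfl hcons.tail').2 d hs
        refine ⟨m + 1, ?_⟩
        rw [hwlen, hm, hPlen]
        ring

lemma nb_unique (hF : (G₀.deleteEdges {estar}).IsAcyclic) :
    ∀ (L : ℕ) {s x : V} (p q : G₀.Walk s x), p.length = L → q.length = L →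
    IsNB p → IsNB q → firstCross estar p = firstCross estar q → p = q := by
  intro L
  induction L using Nat.strong_induction_on with
  | _ L ih =>
    intro s x p q hpl hql hp hq hfc
    cases hfp : firstCross estar p with
    | none =>
      have hfq : firstCross estar q = none := by rw [← hfc, hfp]
      exact nb_unique_avoid hF p q hp hq (avoid_of_firstCross_none hfp)
        (avoid_of_firstCross_none hfq)
    | some d =>
      have hfq : firstCross estar q = some d := by rw [← hfc, hfp]
      obtain ⟨P₁, p', hpeq, hav₁, hP₁, hnb₁, hde⟩ := exists_decomp p hp d hfp
      obtain ⟨P₂, q', hqeq, hav₂, hP₂, hnb₂, -⟩ := exists_decomp q hq d hfq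
      have hPP : P₁ = P₂ := nb_unique_avoid hF P₁ P₂ hP₁ hP₂ hav₁ hav₂
      have hplen : p.length = P₁.length + p'.length + 1 := by
        rw [hpeq, SimpleGraph.Walk.length_append, SimpleGraph.Walk.length_cons]; omega
      have hqlen : q.length = P₂.length + q'.length + 1 := by
        rw [hqeq, SimpleGraph.Walk.length_append, SimpleGraph.Walk.length_cons]; omega
      have hlen' : p'.length = q'.length := by
        rw [hPP] at hplen
        omega
      have hfcsuff : firstCross estar p' = firstCross estar q' := by
        rcases suffix_firstCross hF d p' hnb₁ hde with h1 | h1 <;>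
          rcases suffix_firstCross hF d q' hnb₂ hde with h2 | h2
        · rw [h1, h2]
        · exfalso
          have e1 := (len_formula hF p'.length p' rfl hnb₁.tail').1 h1
          have e2 := (len_formula hF q'.length q' rfl hnb₂.tail').2 d h2
          obtain ⟨m, hm⟩ := e2
          omega
        · exfalso
          have e1 := (len_formula hF q'.length q' rfl hnb₂.tail').1 h2
          have e2 := (len_formula hF p'.length p' rfl hnb₁.tail').2 d h1
          obtain ⟨m, hm⟩ := e2
          omega
        · rw [h1, h2]
      have hlt : p'.length < L := by omega
      have hpq' : p' = q' := ih p'.length hlt p' q' rfl hlen'.symm hnb₁.tail' hnb₂.tail' hfcsuff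
      rw [hpeq, hqeq, hPP, hpq']

lemma nb_count_le_three
    (hdi : G₀.IsAcyclic ∨ ∃ e ∈ G₀.edgeSet, (G₀.deleteEdges {e}).IsAcyclic)
    (u x : V) (L : ℕ) :
    ((G₀.finsetWalkLength L u x).filter (fun p => IsNB p)).card ≤ 3 := by
  rcases hdi with hac | ⟨es, he, hF⟩
  · refine le_trans (Finset.card_le_one.mpr ?_) (by norm_num)
    intro p hp q hq
    rw [Finset.mem_filter] at hp hq
    have hpp := isPath_of_isNB_acyclic hac p hp.2
    have hqp := isPath_of_isNB_acyclic hac q hq.2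
    exact congrArg Subtype.val (hac.path_unique ⟨p, hpp⟩ ⟨q, hqp⟩)
  · induction es using Sym2.ind with
  | _ a b =>
    have hadj : G₀.Adj a b := he
    set d₁ : G₀.Dart := ⟨(a, b), hadj⟩ with hd₁
    have hcard3 : ({none, some d₁, some d₁.symm} : Finset (Option G₀.Dart)).card ≤ 3 := by
      refine le_trans (Finset.card_insert_le _ _) ?_
      have := Finset.card_insert_le (some d₁) ({some d₁.symm} : Finset (Option G₀.Dart))
      simp at this ⊢
      omega
    refine le_trans (Finset.card_le_card_of_injOn (fun p => firstCross s(a,b) p) ?_ ?_) hcard3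
    · intro p hp
      rw [Finset.mem_coe, Finset.mem_filter] at hp
      simp only [Finset.coe_insert, Finset.coe_singleton, Set.mem_insert_iff, Set.mem_singleton_iff]
      cases hfc : firstCross s(a,b) p with
      | none => exact Or.inl rfl
      | some d =>
        have hd'e : d.edge = s(a,b) := by
          have := List.find?_some hfc
          simpa using this
        have : d = d₁ ∨ d = d₁.symm := by
          rw [← SimpleGraph.dart_edge_eq_iff]
          rw [hd'e, hd₁]
          rfl
        rcases this with rfl | rfl
        · exact Or.inr (Or.inl rfl)
        · exact Or.inr (Or.inr rfl)
    · intro p hp q hq hfc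
      rw [Finset.mem_coe, Finset.mem_filter] at hp hq
      have hpl := (SimpleGraph.mem_finsetWalkLength_iff).mp hp.1
      have hql := (SimpleGraph.mem_finsetWalkLength_iff).mp hq.1
      exact nb_unique hF L p q hpl hql hp.2 hq.2 hfc

end Cap


/-! ### Counting non-backtracking walks via darts -/

section Count

variable (Γ : SimpleGraph V)

/-- The darts that can follow a dart in a non-backtracking walk. -/
noncomputable def nxt (d : Γ.Dart) : Finset Γ.Dart :=
  Finset.univ.filter (fun d' => d'.fst = d.snd ∧ d'.snd ≠ d.fst)

/-- Recursive count dominating the number of non-backtracking walks extending a dart. -/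
noncomputable def NN : ℕ → Γ.Dart → ℕ
  | 0, _ => 1
  | (t+1), d => ∑ d' ∈ nxt Γ d, NN t d'

lemma mem_nxt {Γ : SimpleGraph V} {d d' : Γ.Dart} :
    d' ∈ nxt Γ d ↔ d'.fst = d.snd ∧ d'.snd ≠ d.fst := by
  simp [nxt]

lemma nxt_eq_erase (d : Γ.Dart) :
    nxt Γ d = (Finset.univ.filter (fun d' : Γ.Dart => d'.fst = d.snd)).erase d.symm := by
  ext d'
  simp only [nxt, Finset.mem_filter, Finset.mem_erase, Finset.mem_univ, true_and]
  constructor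
  · rintro ⟨h1, h2⟩
    refine ⟨fun hdd => ?_, h1⟩
    rw [hdd] at h2
    exact h2 rfl
  · rintro ⟨hne, h1⟩
    refine ⟨h1, fun h2 => ?_⟩
    apply hne
    apply SimpleGraph.Dart.ext
    exact Prod.ext h1 h2

lemma card_nxt (d : Γ.Dart) : (nxt Γ d).card = Γ.degree d.snd - 1 := by
  rw [nxt_eq_erase, Finset.card_erase_of_mem (by simp),
    ← SimpleGraph.dart_fst_fiber_card_eq_degree]

lemma nxt_nonempty (hdeg : ∀ d : Γ.Dart, 2 ≤ Γ.degree d.snd) (d : Γ.Dart) :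
    (nxt Γ d).Nonempty := by
  rw [← Finset.card_pos, card_nxt]
  have := hdeg d
  omega

lemma NN_pos (hdeg : ∀ d : Γ.Dart, 2 ≤ Γ.degree d.snd) : ∀ (t : ℕ) (d : Γ.Dart), 1 ≤ NN Γ t d := by
  intro t
  induction t with
  | zero => intro d; exact le_refl 1
  | succ t ih =>
    intro d
    obtain ⟨d', hd'⟩ := nxt_nonempty Γ hdeg d
    calc 1 ≤ NN Γ t d' := ih d'
    _ ≤ ∑ d'' ∈ nxt Γ d, NN Γ t d'' :=
        Finset.single_le_sum (fun _ _ => Nat.zero_le _) hd'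
    _ = NN Γ (t+1) d := rfl

lemma dart_symm_injective : Function.Injective (SimpleGraph.Dart.symm : Γ.Dart → Γ.Dart) :=
  Function.Involutive.injective (fun d => SimpleGraph.Dart.symm_symm d)

lemma card_prv (d' : Γ.Dart) :
    (Finset.univ.filter (fun d : Γ.Dart => d' ∈ nxt Γ d)).card = Γ.degree d'.fst - 1 := by
  have him : Finset.univ.filter (fun d : Γ.Dart => d' ∈ nxt Γ d)
      = (nxt Γ d'.symm).image SimpleGraph.Dart.symm := by
    ext d
    simp only [Finset.mem_filter, Finset.mem_univ, true_and, Finset.mem_image]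
    constructor
    · intro h
      obtain ⟨h1, h2⟩ := mem_nxt.mp h
      refine ⟨d.symm, mem_nxt.mpr ⟨h1.symm, fun hcon => h2 hcon.symm⟩, SimpleGraph.Dart.symm_symm d⟩
    · rintro ⟨e, he, rfl⟩
      obtain ⟨h1, h2⟩ := mem_nxt.mp he
      exact mem_nxt.mpr ⟨h1.symm, fun hcon => h2 hcon.symm⟩
  rw [him, Finset.card_image_of_injective _ (dart_symm_injective Γ), card_nxt]
  rfl

lemma swap_sum (hdeg : ∀ d : Γ.Dart, 2 ≤ Γ.degree d.snd) (g : Γ.Dart → ℝ) :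
    ∑ d : Γ.Dart, (∑ d' ∈ nxt Γ d, g d') / ((nxt Γ d).card : ℝ) = ∑ d' : Γ.Dart, g d' := by
  have hstep : ∀ d : Γ.Dart, (∑ d' ∈ nxt Γ d, g d') / ((nxt Γ d).card : ℝ)
      = ∑ d' ∈ nxt Γ d, g d' / ((nxt Γ d).card : ℝ) := fun d => Finset.sum_div _ _ _
  rw [Finset.sum_congr rfl (fun d _ => hstep d)]
  rw [Finset.sum_comm' (s := Finset.univ) (t := fun d => nxt Γ d) (t' := Finset.univ)
    (s' := fun d' => Finset.univ.filter (fun d : Γ.Dart => d' ∈ nxt Γ d))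
    (by intro x y; simp)]
  refine Finset.sum_congr rfl (fun d' _ => ?_)
  have hconst : ∀ d ∈ Finset.univ.filter (fun d : Γ.Dart => d' ∈ nxt Γ d),
      g d' / ((nxt Γ d).card : ℝ) = g d' / ((Γ.degree d'.fst - 1 : ℕ) : ℝ) := by
    intro d hd
    simp only [Finset.mem_filter, Finset.mem_univ, true_and, nxt] at hd
    rw [card_nxt]
    rw [hd.1]
  rw [Finset.sum_congr rfl hconst, Finset.sum_const, card_prv]
  have hdeg' : 2 ≤ Γ.degree d'.fst := by
    have := hdeg d'.symm
    exact this
  have hne : ((Γ.degree d'.fst - 1 : ℕ) : ℝ) ≠ 0 := by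
    have h1 : 1 ≤ Γ.degree d'.fst - 1 := by omega
    exact_mod_cast Nat.one_le_iff_ne_zero.mp h1
  have hne' : ((Γ.degree d'.fst : ℝ) - 1) ≠ 0 := by
    have : (2:ℝ) ≤ (Γ.degree d'.fst : ℝ) := by exact_mod_cast hdeg'
    linarith
  rw [nsmul_eq_mul, Nat.cast_sub (by omega), Nat.cast_one, mul_comm,
    div_mul_cancel₀ _ hne']

/-- The entropy-style lower bound: `t · S ≤ Σ_d log N_t(d)`. -/
lemma flb (hdeg : ∀ d : Γ.Dart, 2 ≤ Γ.degree d.snd) : ∀ t : ℕ,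
    (t : ℝ) * (∑ d : Γ.Dart, Real.log ((nxt Γ d).card))
      ≤ ∑ d : Γ.Dart, Real.log (NN Γ t d) := by
  intro t
  induction t with
  | zero => simp [NN]
  | succ t iht =>
    have key : ∀ d : Γ.Dart, Real.log ((nxt Γ d).card)
        + (∑ d' ∈ nxt Γ d, Real.log (NN Γ t d')) / ((nxt Γ d).card : ℝ)
        ≤ Real.log (NN Γ (t+1) d) := by
      intro d
      have hamgm := log_card_add_avg_le_log_sum (nxt Γ d) (nxt_nonempty Γ hdeg d)
        (fun d' => (NN Γ t d' : ℝ))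
        (fun d' _ => by exact Nat.one_le_cast.mpr (NN_pos Γ hdeg t d'))
      have hcast : ((NN Γ (t+1) d : ℕ) : ℝ) = ∑ d' ∈ nxt Γ d, ((NN Γ t d' : ℕ) : ℝ) := by
        show ((∑ d' ∈ nxt Γ d, NN Γ t d' : ℕ) : ℝ) = _
        push_cast
        rfl
      rw [hcast]
      exact hamgm
    have hsum := Finset.sum_le_sum (fun d (_ : d ∈ Finset.univ) => key d)
    rw [Finset.sum_add_distrib] at hsum
    have hswap := swap_sum Γ hdeg (fun d' => Real.log (NN Γ t d'))
    rw [hswap] at hsum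
    push_cast
    nlinarith [hsum, iht]

lemma dart_snd_fiber_card (x : V) :
    (Finset.univ.filter fun d : Γ.Dart => d.snd = x).card = Γ.degree x := by
  have him : (Finset.univ.filter fun d : Γ.Dart => d.snd = x)
      = (Finset.univ.filter fun d : Γ.Dart => d.fst = x).image SimpleGraph.Dart.symm := by
    ext d
    simp only [Finset.mem_filter, Finset.mem_univ, true_and, Finset.mem_image]
    constructor
    · intro h
      exact ⟨d.symm, h, SimpleGraph.Dart.symm_symm d⟩
    · rintro ⟨e, he, rfl⟩
      exact he
  rw [him, Finset.card_image_of_injective _ (dart_symm_injective Γ),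
    SimpleGraph.dart_fst_fiber_card_eq_degree]

lemma deg_dichot (hdeg : ∀ d : Γ.Dart, 2 ≤ Γ.degree d.snd) (x : V) :
    Γ.degree x = 0 ∨ 2 ≤ Γ.degree x := by
  by_cases h : Γ.degree x = 0
  · exact Or.inl h
  · right
    have : 0 < Γ.degree x := Nat.pos_of_ne_zero h
    rw [← SimpleGraph.card_neighborFinset_eq_degree] at this
    obtain ⟨y, hy⟩ := Finset.card_pos.mp this
    rw [SimpleGraph.mem_neighborFinset] at hy
    exact hdeg ⟨(y, x), hy.symm⟩

/-- Reindex the dart sum to vertices, and bound below using the per-degree log inequality. -/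
lemma S_ge (hdeg : ∀ d : Γ.Dart, 2 ≤ Γ.degree d.snd) :
    3 * Real.log 2 *
      (∑ x ∈ Finset.univ.filter (fun x => Γ.degree x ≠ 0), ((Γ.degree x : ℝ) - 2))
      ≤ ∑ d : Γ.Dart, Real.log ((nxt Γ d).card) := by
  have hfib : ∑ d : Γ.Dart, Real.log ((nxt Γ d).card)
      = ∑ x : V, ∑ d ∈ Finset.univ.filter (fun d : Γ.Dart => d.snd = x),
          Real.log ((nxt Γ d).card) := by
    rw [Finset.sum_fiberwise]
  rw [hfib]
  have hconst : ∀ x : V, ∑ d ∈ Finset.univ.filter (fun d : Γ.Dart => d.snd = x),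
      Real.log ((nxt Γ d).card)
      = (Γ.degree x : ℝ) * Real.log ((Γ.degree x - 1 : ℕ) : ℝ) := by
    intro x
    have : ∀ d ∈ Finset.univ.filter (fun d : Γ.Dart => d.snd = x),
        Real.log ((nxt Γ d).card) = Real.log ((Γ.degree x - 1 : ℕ) : ℝ) := by
      intro d hd
      simp only [Finset.mem_filter, Finset.mem_univ, true_and] at hd
      rw [card_nxt, hd]
    rw [Finset.sum_congr rfl this, Finset.sum_const, dart_snd_fiber_card, nsmul_eq_mul]
  rw [Finset.sum_congr rfl (fun x _ => hconst x)]
  have hterm : ∀ x : V, x ∈ Finset.univ.filter (fun x => Γ.degree x ≠ 0) →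
      3 * Real.log 2 * ((Γ.degree x : ℝ) - 2)
        ≤ (Γ.degree x : ℝ) * Real.log ((Γ.degree x - 1 : ℕ) : ℝ) := by
    intro x hx
    simp only [Finset.mem_filter, Finset.mem_univ, true_and] at hx
    rcases deg_dichot Γ hdeg x with h0 | h2
    · exact absurd h0 hx
    · have hcast : ((Γ.degree x - 1 : ℕ) : ℝ) = (Γ.degree x : ℝ) - 1 := by
        rw [Nat.cast_sub (by omega), Nat.cast_one]
      rw [hcast]
      exact deg_log_ineq h2
  have hnonneg : ∀ x : V, 0 ≤ (Γ.degree x : ℝ) * Real.log ((Γ.degree x - 1 : ℕ) : ℝ) := by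
    intro x
    apply mul_nonneg (by positivity)
    rcases Nat.eq_zero_or_pos (Γ.degree x - 1) with h | h
    · rw [h]; simp
    · apply Real.log_nonneg
      exact_mod_cast h
  calc 3 * Real.log 2 *
      (∑ x ∈ Finset.univ.filter (fun x => Γ.degree x ≠ 0), ((Γ.degree x : ℝ) - 2))
      = ∑ x ∈ Finset.univ.filter (fun x => Γ.degree x ≠ 0),
          3 * Real.log 2 * ((Γ.degree x : ℝ) - 2) := by rw [Finset.mul_sum]
    _ ≤ ∑ x ∈ Finset.univ.filter (fun x => Γ.degree x ≠ 0),
          (Γ.degree x : ℝ) * Real.log ((Γ.degree x - 1 : ℕ) : ℝ) := Finset.sum_le_sum hterm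
    _ ≤ ∑ x : V, (Γ.degree x : ℝ) * Real.log ((Γ.degree x - 1 : ℕ) : ℝ) :=
        Finset.sum_le_sum_of_subset_of_nonneg (Finset.filter_subset _ _)
          (fun x _ _ => hnonneg x)

end Count


/-! ### Bounding the recursive count by walk counts, and the cap -/

section CountWalks

variable (Γ : SimpleGraph V)

/-- Non-backtracking walks of length `t+1` from `u` to `x` whose first dart is `d`. -/
noncomputable def Afin (t : ℕ) (u : V) (d : Γ.Dart) (x : V) : Finset (Γ.Walk u x) :=
  (Γ.finsetWalkLength (t+1) u x).filter (fun p => IsNB p ∧ p.darts.head? = some d)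

lemma glue_bound (t : ℕ) (d : Γ.Dart) (x : V) :
    ∑ d' ∈ nxt Γ d, (Afin Γ t d.snd d' x).card ≤ (Afin Γ (t+1) d.fst d x).card := by
  classical
  have hdisj : ∀ d₁ ∈ nxt Γ d, ∀ d₂ ∈ nxt Γ d, d₁ ≠ d₂ →
      Disjoint (Afin Γ t d.snd d₁ x) (Afin Γ t d.snd d₂ x) := by
    intro d₁ _ d₂ _ hne
    rw [Finset.disjoint_left]
    intro p hp₁ hp₂
    rw [Afin, Finset.mem_filter] at hp₁ hp₂
    apply hne
    have h1 := hp₁.2.2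
    rw [hp₂.2.2] at h1
    exact (Option.some_inj.mp h1).symm
  rw [← Finset.card_biUnion hdisj]
  apply Finset.card_le_card_of_injOn (fun p => SimpleGraph.Walk.cons d.adj p)
  · intro p hp
    rw [Finset.mem_coe, Finset.mem_biUnion] at hp
    obtain ⟨d', hd', hp⟩ := hp
    rw [Afin, Finset.mem_filter] at hp
    rw [Afin, Finset.mem_coe, Finset.mem_filter]
    obtain ⟨hlen, hnb, hhd⟩ := hp
    obtain ⟨hfst, hsnd⟩ := mem_nxt.mp hd'
    refine ⟨?_, ?_, ?_⟩
    · rw [SimpleGraph.mem_finsetWalkLength_iff] at hlen ⊢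
      rw [SimpleGraph.Walk.length_cons, hlen]
    · have hd1 : p.darts.map SimpleGraph.Dart.toProd
          = d'.toProd :: (p.darts.tail.map SimpleGraph.Dart.toProd) := by
        cases hds : p.darts with
        | nil => rw [hds] at hhd; simp at hhd
        | cons dh dt =>
          rw [hds] at hhd
          simp only [List.head?_cons, Option.some_inj] at hhd
          rw [hhd]
          simp
      simp only [IsNB, SimpleGraph.Walk.darts_cons, List.map_cons]
      rw [List.Chain', List.isChain_cons]
      constructor
      · intro y hy
        rw [hd1] at hy
        simp only [List.head?_cons, Option.mem_def, Option.some_inj] at hy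
        subst hy
        exact fun hcon => hsnd hcon.symm
      · exact hnb
    · simp only [SimpleGraph.Walk.darts_cons, List.head?_cons, Option.some_inj]
  · intro p₁ h₁ p₂ h₂ heq
    simp only [SimpleGraph.Walk.cons.injEq, heq_eq_eq, true_and] at heq
    exact heq

lemma NN_le_walks : ∀ (t : ℕ) (d : Γ.Dart),
    NN Γ t d ≤ ∑ x : V, (Afin Γ t d.fst d x).card := by
  intro t
  induction t with
  | zero =>
    intro d
    have hmem : (SimpleGraph.Walk.cons d.adj SimpleGraph.Walk.nil) ∈ Afin Γ 0 d.fst d d.snd := by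
      rw [Afin, Finset.mem_filter]
      refine ⟨SimpleGraph.mem_finsetWalkLength_iff.mpr (by simp), ?_, ?_⟩
      · simp [IsNB, List.Chain']
      · simp only [SimpleGraph.Walk.darts_cons, SimpleGraph.Walk.darts_nil,
          List.head?_cons, Option.some_inj]
    calc NN Γ 0 d = 1 := rfl
    _ ≤ (Afin Γ 0 d.fst d d.snd).card := Finset.card_pos.mpr ⟨_, hmem⟩
    _ ≤ ∑ x : V, (Afin Γ 0 d.fst d x).card :=
        Finset.single_le_sum (f := fun x => (Afin Γ 0 d.fst d x).card)
          (fun _ _ => Nat.zero_le _) (Finset.mem_univ d.snd)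
  | succ t ih =>
    intro d
    calc NN Γ (t+1) d = ∑ d' ∈ nxt Γ d, NN Γ t d' := rfl
    _ ≤ ∑ d' ∈ nxt Γ d, ∑ x : V, (Afin Γ t d'.fst d' x).card :=
        Finset.sum_le_sum (fun d' _ => ih d')
    _ = ∑ d' ∈ nxt Γ d, ∑ x : V, (Afin Γ t d.snd d' x).card := by
        refine Finset.sum_congr rfl (fun d' hd' => ?_)
        obtain ⟨hfst, -⟩ := mem_nxt.mp hd'
        rw [hfst]
    _ = ∑ x : V, ∑ d' ∈ nxt Γ d, (Afin Γ t d.snd d' x).card := Finset.sum_comm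
    _ ≤ ∑ x : V, (Afin Γ (t+1) d.fst d x).card :=
        Finset.sum_le_sum (fun x _ => glue_bound Γ t d x)

end CountWalks


/-! ### Applying the cap through the ball restriction -/

section CapApp

variable {H Γ : SimpleGraph V} {r : ℕ}

lemma walk_edges_in_ballRestrict (hΓ : Γ ≤ H) {u x : V} (p : Γ.Walk u x) (hp : p.length ≤ r) :
    ∀ e ∈ p.edges, e ∈ (restrictG Γ (ball Γ u r)).edgeSet := by
  intro e he
  induction e with
  | _ a b =>
    have hadj : Γ.Adj a b := p.adj_of_mem_edges he
    have ha : a ∈ p.support := SimpleGraph.Walk.fst_mem_support_of_mem_edges p he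
    have hb : b ∈ p.support := SimpleGraph.Walk.snd_mem_support_of_mem_edges p he
    rw [SimpleGraph.mem_edgeSet]
    exact ⟨hadj, support_subset_ball p hp ha, support_subset_ball p hp hb⟩

lemma ballRestrict_dichotomy (hΓ : Γ ≤ H) (hbf : BicycleFree H r) (u : V) :
    (restrictG Γ (ball Γ u r)).IsAcyclic ∨
      ∃ e ∈ (restrictG Γ (ball Γ u r)).edgeSet,
        ((restrictG Γ (ball Γ u r)).deleteEdges {e}).IsAcyclic := by
  set C := ball Γ u r with hC
  set G₀ := restrictG Γ C with hG₀
  apply unicyclic_dichotomy G₀ u C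
  · -- reachability
    intro x hx
    obtain ⟨p, hp⟩ := mem_ball_iff.mp hx
    exact ⟨p.transfer G₀ (walk_edges_in_ballRestrict hΓ p hp)⟩
  · -- edges within C
    intro e he
    rw [restrictG_edgeFinset, inEdges, Finset.mem_filter] at he
    exact he.2
  · -- edge count
    have h1 : G₀.edgeFinset ⊆ inEdges H C := by
      intro e he
      rw [restrictG_edgeFinset, inEdges, Finset.mem_filter] at he
      rw [inEdges, Finset.mem_filter]
      refine ⟨?_, he.2⟩
      rw [SimpleGraph.mem_edgeFinset] at he ⊢
      exact SimpleGraph.edgeSet_mono hΓ he.1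
    calc G₀.edgeFinset.card ≤ (inEdges H C).card := Finset.card_le_card h1
    _ = edgesWithin H C := rfl
    _ ≤ C.card := by
        apply edgesWithin_le_of_subset_ball H (hbf u) _ self_mem_ball
        exact ball_mono_graph hΓ u r

lemma gamma_nb_count_le (hΓ : Γ ≤ H) (hbf : BicycleFree H r) (u x : V) {L : ℕ} (hL : L ≤ r) :
    ((Γ.finsetWalkLength L u x).filter (fun p => IsNB p)).card ≤ 3 := by
  classical
  set C := ball Γ u r with hC
  set G₀ := restrictG Γ C with hG₀
  set s := (Γ.finsetWalkLength L u x).filter (fun p => IsNB p) with hs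
  rcases Finset.eq_empty_or_nonempty s with hemp | ⟨p₀, hp₀⟩
  · rw [hemp]; simp
  · have hedges : ∀ p ∈ s, ∀ e ∈ p.edges, e ∈ G₀.edgeSet := by
      intro p hp
      rw [hs, Finset.mem_filter] at hp
      have hplen : p.length ≤ r :=
        le_trans (le_of_eq (SimpleGraph.mem_finsetWalkLength_iff.mp hp.1)) hL
      exact walk_edges_in_ballRestrict hΓ p hplen
    set f : Γ.Walk u x → G₀.Walk u x := fun p =>
      if h : p ∈ s then p.transfer G₀ (hedges p h) else p₀.transfer G₀ (hedges p₀ hp₀) with hf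
    have hcap := nb_count_le_three (ballRestrict_dichotomy hΓ hbf u) u x L
    refine le_trans (Finset.card_le_card_of_injOn f ?_ ?_) hcap
    · intro p hp
      rw [Finset.mem_coe] at hp ⊢
      rw [hf]
      simp only [dif_pos hp]
      rw [Finset.mem_filter] at hp ⊢
      constructor
      · rw [SimpleGraph.mem_finsetWalkLength_iff, SimpleGraph.Walk.length_transfer]
        exact SimpleGraph.mem_finsetWalkLength_iff.mp hp.1
      · exact (isNB_transfer p (hedges p (Finset.mem_filter.mpr hp))).mpr hp.2
    · intro p h₁ q h₂ heq
      rw [Finset.mem_coe] at h₁ h₂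
      rw [hf] at heq
      simp only [dif_pos h₁, dif_pos h₂] at heq
      have hback := congrArg (fun w : G₀.Walk u x => w.transfer Γ (by
        intro e he
        exact SimpleGraph.edgeSet_mono (restrictG_le Γ C) (w.edges_subset_edgeSet he))) heq
      simp only [SimpleGraph.Walk.transfer_transfer] at hback
      rwa [SimpleGraph.Walk.transfer_self, SimpleGraph.Walk.transfer_self] at hback

lemma NN_le_cap (hΓ : Γ ≤ H) (hbf : BicycleFree H r) (hr1 : 1 ≤ r) (d : Γ.Dart) :
    NN Γ (r - 1) d ≤ 3 * Fintype.card V := by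
  calc NN Γ (r-1) d ≤ ∑ x : V, (Afin Γ (r-1) d.fst d x).card := NN_le_walks Γ (r-1) d
  _ ≤ ∑ x : V, ((Γ.finsetWalkLength ((r-1)+1) d.fst x).filter (fun p => IsNB p)).card := by
      apply Finset.sum_le_sum
      intro x _
      apply Finset.card_le_card
      rw [Afin]
      intro p hp
      rw [Finset.mem_filter] at hp ⊢
      exact ⟨hp.1, hp.2.1⟩
  _ ≤ ∑ _x : V, 3 := by
      apply Finset.sum_le_sum
      intro x _
      have hrr : (r - 1) + 1 = r := by omega
      rw [hrr]
      exact gamma_nb_count_le hΓ hbf d.fst x (le_refl r)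
  _ = 3 * Fintype.card V := by
      rw [Finset.sum_const, Finset.card_univ, smul_eq_mul, mul_comm]

end CapApp


/-! ### Final arithmetic -/

set_option maxHeartbeats 1000000 in
lemma final_arith {k P E v a rr : ℝ} (hk : 1 ≤ k) (hEk : E = k + P) (hP : 0 ≤ P) (hPv : P ≤ v)
    (hr10 : 10 * a ≤ rr) (hr11 : 11 ≤ rr) (ha : 1.097 ≤ a)
    (hmain : 6 * Real.log 2 * (k * (rr - 1)) ≤ 2 * E * (Real.log 3 + a)) :
    k * rr ≤ v * (1 + a) := by
  have l2l : (0.6931 : ℝ) ≤ Real.log 2 := by nlinarith [Real.log_two_gt_d9]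
  have l3u : Real.log 3 ≤ 1.11 := by
    have h12 : (5:ℝ) * Real.log 3 ≤ 8 * Real.log 2 := by
      have h0 := Real.log_le_log (show (0:ℝ) < 3^(5:ℕ) by norm_num)
        (show ((3:ℝ)^(5:ℕ)) ≤ 2^(8:ℕ) by norm_num)
      rw [Real.log_pow, Real.log_pow] at h0
      exact_mod_cast h0
    nlinarith [Real.log_two_lt_d9]
  have hk0 : (0:ℝ) ≤ k := by linarith
  have hrr0 : (0:ℝ) ≤ rr := by linarith
  have hv0 : (0:ℝ) ≤ v := by linarith
  have ha0 : (0:ℝ) ≤ a := by linarith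
  have l3l : (0:ℝ) ≤ Real.log 3 := Real.log_nonneg (by norm_num)
  have hla : (0:ℝ) ≤ Real.log 3 + a := by linarith
  have h2 : (10/11) * (k * rr) ≤ k * (rr - 1) := by
    nlinarith [mul_nonneg hk0 (by linarith : (0:ℝ) ≤ rr - 11)]
  have h1 : 6 * 0.6931 * ((10/11) * (k * rr)) ≤ 6 * Real.log 2 * (k * (rr - 1)) := by
    have hx : (0:ℝ) ≤ k * (rr - 1) := mul_nonneg hk0 (by linarith)
    have hy : (0:ℝ) ≤ 10/11 * (k * rr) := by positivity
    nlinarith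
  have h4a : 2 * E * (Real.log 3 + a) ≤ 2 * (k + v) * (Real.log 3 + a) := by
    apply mul_le_mul_of_nonneg_right _ hla
    linarith
  have h4 : 2 * (k + v) * (Real.log 3 + a) ≤ 2 * (k + v) * (1.11 + a) := by
    apply mul_le_mul_of_nonneg_left _ (by linarith)
    linarith
  have h5 : 2 * (1.11 + a) ≤ 0.41 * rr := by linarith
  have h6 : 2 * k * (1.11 + a) ≤ 0.41 * rr * k := by
    have h := mul_le_mul_of_nonneg_right h5 hk0
    nlinarith [h]
  have hexp : 2 * (k + v) * (1.11 + a) = 2 * k * (1.11 + a) + 2 * v * (1.11 + a) := by ring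
  have h7 : (6 * 0.6931 * (10/11)) * (k * rr) ≤ 0.41 * rr * k + 2 * v * (1.11 + a) := by
    nlinarith [h1, hmain, h4a, h4, h6, hexp]
  have h8 : 3.37 * (k * rr) ≤ 2 * v * (1.11 + a) := by nlinarith [h7]
  have h9 : 2 * v * (1.11 + a) ≤ 3.37 * (v * (1 + a)) := by
    nlinarith [mul_nonneg hv0 (by linarith : (0:ℝ) ≤ 1.15 + 1.37 * a)]
  nlinarith [h8, h9]

lemma three_le_card {Γ : SimpleGraph V} (hdeg : ∀ d : Γ.Dart, 2 ≤ Γ.degree d.snd)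
    (hE : 0 < Γ.edgeFinset.card) : 3 ≤ Fintype.card V := by
  obtain ⟨e, he⟩ := Finset.card_pos.mp hE
  rw [SimpleGraph.mem_edgeFinset] at he
  induction e using Sym2.ind with
  | _ a b =>
    rw [SimpleGraph.mem_edgeSet] at he
    have hdega : 1 < (Γ.neighborFinset b).card := by
      rw [SimpleGraph.card_neighborFinset_eq_degree]
      exact hdeg ⟨(a, b), he⟩
    obtain ⟨y, hy, z, hz, hyz⟩ := Finset.one_lt_card.mp hdega
    rw [SimpleGraph.mem_neighborFinset] at hy hz
    have h3 : ({b, y, z} : Finset V).card = 3 := by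
      rw [Finset.card_insert_of_notMem (by
          simp only [Finset.mem_insert, Finset.mem_singleton]
          push_neg
          exact ⟨hy.ne, hz.ne⟩),
        Finset.card_insert_of_notMem (by simp [hyz]), Finset.card_singleton]
    calc (3:ℕ) = ({b, y, z} : Finset V).card := h3.symm
    _ ≤ (Finset.univ : Finset V).card := Finset.card_le_univ _
    _ = Fintype.card V := Finset.card_univ

lemma log_three_lb : (1.097 : ℝ) ≤ Real.log 3 := by
  have h12 : (19:ℝ) * Real.log 2 ≤ 12 * Real.log 3 := by
    have := Real.log_le_log (show (0:ℝ) < 2^(19:ℕ) by norm_num)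
      (show ((2:ℝ)^(19:ℕ)) ≤ 3^(12:ℕ) by norm_num)
    rw [Real.log_pow, Real.log_pow] at this
    exact_mod_cast this
  nlinarith [Real.log_two_gt_d9]

set_option maxHeartbeats 1000000 in
/-- Theorem 2.13. -/
theorem excess_le_of_bicycleFree' (H : SimpleGraph V) (r : ℕ) (hbf : BicycleFree H r)
    (hr : 10 * Real.log (Fintype.card V) ≤ (r : ℝ)) :
    (H.edgeFinset.card : ℝ) - (Fintype.card V : ℝ)
      ≤ Real.log (Real.exp 1 * (Fintype.card V : ℝ)) / (r : ℝ) * (Fintype.card V : ℝ) := by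
  classical
  have hRHSnn : 0 ≤ Real.log (Real.exp 1 * (Fintype.card V : ℝ)) / (r:ℝ) * (Fintype.card V : ℝ) := by
    have hlog : 0 ≤ Real.log (Real.exp 1 * (Fintype.card V : ℝ)) := by
      rcases Nat.eq_zero_or_pos (Fintype.card V) with h0 | h1
      · rw [h0]; simp
      · apply Real.log_nonneg
        have h1' : (1:ℝ) ≤ (Fintype.card V : ℝ) := by exact_mod_cast h1
        have he1 : (1:ℝ) ≤ Real.exp 1 := by
          rw [Real.one_le_exp_iff]; norm_num
        nlinarith
    exact mul_nonneg (div_nonneg hlog (by positivity)) (by positivity)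
  have huniv : H.edgeFinset.card + (Finset.univ : Finset V).card
      ≤ edgesWithin H Finset.univ + Fintype.card V := by
    have heq : edgesWithin H Finset.univ = H.edgeFinset.card := by
      rw [edgesWithin, Finset.filter_true_of_mem (fun e _ => fun x _ => Finset.mem_univ x)]
    rw [heq, Finset.card_univ]
  obtain ⟨S, hSdeg, hSineq⟩ := peel_aux H (Finset.univ : Finset V).card Finset.univ (le_refl _) huniv
  have hΓH : restrictG H S ≤ H := restrictG_le H S
  have hEΓ : edgesWithin H S = (restrictG H S).edgeFinset.card := by
    rw [edgesWithin_eq_card, restrictG_edgeFinset]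
  have hPS : (Finset.univ.filter (fun x => (restrictG H S).degree x ≠ 0)).card ≤ S.card := by
    apply Finset.card_le_card
    intro x hx
    rw [Finset.mem_filter] at hx
    by_contra hxS
    exact hx.2 (restrictG_degree_zero H S hxS)
  have hkey : H.edgeFinset.card + (Finset.univ.filter (fun x => (restrictG H S).degree x ≠ 0)).card
      ≤ (restrictG H S).edgeFinset.card + Fintype.card V := by
    rw [← hEΓ]
    omega
  by_cases hsmall : (restrictG H S).edgeFinset.card
      ≤ (Finset.univ.filter (fun x => (restrictG H S).degree x ≠ 0)).card
  · have hEv : H.edgeFinset.card ≤ Fintype.card V := by omega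
    have hle : (H.edgeFinset.card : ℝ) - (Fintype.card V : ℝ) ≤ 0 := by
      have : (H.edgeFinset.card : ℝ) ≤ (Fintype.card V : ℝ) := by exact_mod_cast hEv
      linarith
    linarith
  · push_neg at hsmall
    have hdeg : ∀ d : (restrictG H S).Dart, 2 ≤ (restrictG H S).degree d.snd := by
      intro d
      have hsnd : d.snd ∈ S := d.adj.2.2
      show 2 ≤ ((restrictG H S).neighborFinset d.snd).card
      rw [restrictG_neighborFinset H S hsnd]
      exact hSdeg d.snd hsnd
    have hv3 : 3 ≤ Fintype.card V := three_le_card hdeg (by omega)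
    have hv3' : (3:ℝ) ≤ (Fintype.card V : ℝ) := by exact_mod_cast hv3
    have ha3 : (1.097:ℝ) ≤ Real.log (Fintype.card V : ℝ) :=
      le_trans log_three_lb (Real.log_le_log (by norm_num) hv3')
    have hr11 : 11 ≤ r := by
      have h10 : (10:ℝ) < (r:ℝ) := by nlinarith
      have h10' : (10:ℕ) < r := by exact_mod_cast h10
      omega
    have hflb := flb (restrictG H S) hdeg (r-1)
    have hcap : ∀ d : (restrictG H S).Dart,
        Real.log ((NN (restrictG H S) (r-1) d : ℕ) : ℝ)
          ≤ Real.log (3 * (Fintype.card V : ℝ)) := by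
      intro d
      apply Real.log_le_log
      · exact_mod_cast NN_pos (restrictG H S) hdeg (r-1) d
      · have h := NN_le_cap hΓH hbf (by omega) d
        exact_mod_cast h
    have hsum_cap : ∑ d : (restrictG H S).Dart, Real.log ((NN (restrictG H S) (r-1) d : ℕ) : ℝ)
        ≤ (Fintype.card (restrictG H S).Dart : ℝ) * Real.log (3 * (Fintype.card V : ℝ)) := by
      calc ∑ d : (restrictG H S).Dart, Real.log ((NN (restrictG H S) (r-1) d : ℕ) : ℝ)
          ≤ ∑ _d : (restrictG H S).Dart, Real.log (3 * (Fintype.card V : ℝ)) :=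
            Finset.sum_le_sum (fun d _ => hcap d)
      _ = (Fintype.card (restrictG H S).Dart : ℝ) * Real.log (3 * (Fintype.card V : ℝ)) := by
          rw [Finset.sum_const, Finset.card_univ, nsmul_eq_mul]
    have hdartcard : (Fintype.card (restrictG H S).Dart : ℝ)
        = 2 * ((restrictG H S).edgeFinset.card : ℝ) := by
      have h := SimpleGraph.dart_card_eq_twice_card_edges (restrictG H S)
      exact_mod_cast h
    have hS0 := S_ge (restrictG H S) hdeg
    have hsum1 : ∑ x ∈ Finset.univ.filter (fun x => (restrictG H S).degree x ≠ 0),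
        (((restrictG H S).degree x : ℝ) - 2)
        = 2 * ((restrictG H S).edgeFinset.card : ℝ)
          - 2 * ((Finset.univ.filter (fun x => (restrictG H S).degree x ≠ 0)).card : ℝ) := by
      have hext : ∑ x ∈ Finset.univ.filter (fun x => (restrictG H S).degree x ≠ 0),
          (((restrictG H S).degree x : ℝ)) = ∑ x : V, (((restrictG H S).degree x : ℝ)) := by
        apply Finset.sum_subset (Finset.filter_subset _ _)
        intro x _ hx
        rw [Finset.mem_filter] at hx
        push_neg at hx
        rw [hx (Finset.mem_univ x)]
        norm_num
      have hhs := SimpleGraph.sum_degrees_eq_twice_card_edges (restrictG H S)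
      have hdegsum : ∑ x ∈ Finset.univ.filter (fun x => (restrictG H S).degree x ≠ 0),
          (((restrictG H S).degree x : ℝ)) = 2 * ((restrictG H S).edgeFinset.card : ℝ) := by
        rw [hext]
        calc ∑ x : V, (((restrictG H S).degree x : ℝ))
            = ((∑ x : V, (restrictG H S).degree x : ℕ) : ℝ) := by push_cast; ring
        _ = 2 * ((restrictG H S).edgeFinset.card : ℝ) := by rw [hhs]; push_cast; ring
      rw [Finset.sum_sub_distrib, hdegsum, Finset.sum_const, nsmul_eq_mul]
      ring
    rw [hsum1] at hS0
    have hr1R : ((r-1 : ℕ) : ℝ) = (r:ℝ) - 1 := by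
      have h1 : 1 ≤ r := by omega
      push_cast [Nat.cast_sub h1]
      ring
    have hchain : 6 * Real.log 2 *
        ((((restrictG H S).edgeFinset.card : ℝ)
          - ((Finset.univ.filter (fun x => (restrictG H S).degree x ≠ 0)).card : ℝ))
          * ((r:ℝ) - 1))
        ≤ 2 * ((restrictG H S).edgeFinset.card : ℝ)
          * (Real.log 3 + Real.log (Fintype.card V : ℝ)) := by
      have hstep1 : ((r-1:ℕ):ℝ) * (3 * Real.log 2
            * (2 * ((restrictG H S).edgeFinset.card : ℝ)
              - 2 * ((Finset.univ.filter (fun x => (restrictG H S).degree x ≠ 0)).card : ℝ)))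
          ≤ ((r-1:ℕ):ℝ) * (∑ d : (restrictG H S).Dart, Real.log ((nxt (restrictG H S) d).card)) :=
        mul_le_mul_of_nonneg_left hS0 (by positivity)
      have hstep2 := le_trans hstep1 hflb
      have hstep3 := le_trans hstep2 hsum_cap
      rw [hdartcard, hr1R] at hstep3
      have hlog3v : Real.log (3 * (Fintype.card V : ℝ))
          = Real.log 3 + Real.log (Fintype.card V : ℝ) := by
        rw [Real.log_mul (by norm_num) (by positivity)]
      rw [hlog3v] at hstep3
      nlinarith [hstep3]
    have hk1 : (1:ℝ) ≤ ((restrictG H S).edgeFinset.card : ℝ)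
        - ((Finset.univ.filter (fun x => (restrictG H S).degree x ≠ 0)).card : ℝ) := by
      have h1 : (Finset.univ.filter (fun x => (restrictG H S).degree x ≠ 0)).card + 1
          ≤ (restrictG H S).edgeFinset.card := hsmall
      have h2 : (((Finset.univ.filter (fun x => (restrictG H S).degree x ≠ 0)).card : ℝ)) + 1
          ≤ ((restrictG H S).edgeFinset.card : ℝ) := by exact_mod_cast h1
      linarith
    have hPv : (((Finset.univ.filter (fun x => (restrictG H S).degree x ≠ 0)).card : ℕ) : ℝ)
        ≤ (Fintype.card V : ℝ) := by
      have h1 : (Finset.univ.filter (fun x => (restrictG H S).degree x ≠ 0)).card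
          ≤ Fintype.card V :=
        le_trans hPS (le_trans (Finset.card_le_univ S) (le_of_eq Finset.card_univ))
      exact_mod_cast h1
    have hfin := final_arith hk1 (by ring) (by positivity) hPv hr
      (by exact_mod_cast hr11) ha3 hchain
    have hrpos : (0:ℝ) < (r:ℝ) := by
      have h0 : 0 < r := by omega
      exact_mod_cast h0
    have hlogev : Real.log (Real.exp 1 * (Fintype.card V : ℝ))
        = 1 + Real.log (Fintype.card V : ℝ) := by
      rw [Real.log_mul (Real.exp_ne_zero 1) (by positivity), Real.log_exp]
    have hLHS : (H.edgeFinset.card : ℝ) - (Fintype.card V : ℝ)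
        ≤ ((restrictG H S).edgeFinset.card : ℝ)
          - ((Finset.univ.filter (fun x => (restrictG H S).degree x ≠ 0)).card : ℝ) := by
      have h1 := hkey
      have h2 : ((H.edgeFinset.card : ℕ) : ℝ)
          + ((Finset.univ.filter (fun x => (restrictG H S).degree x ≠ 0)).card : ℝ)
          ≤ ((restrictG H S).edgeFinset.card : ℝ) + (Fintype.card V : ℝ) := by
        exact_mod_cast h1
      linarith
    rw [hlogev]
    calc (H.edgeFinset.card : ℝ) - (Fintype.card V : ℝ)
        ≤ ((restrictG H S).edgeFinset.card : ℝ)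
          - ((Finset.univ.filter (fun x => (restrictG H S).degree x ≠ 0)).card : ℝ) := hLHS
    _ ≤ (Fintype.card V : ℝ) * (1 + Real.log (Fintype.card V : ℝ)) / (r:ℝ) := by
        rw [le_div_iff₀ hrpos]
        linarith [hfin]
    _ = (1 + Real.log (Fintype.card V : ℝ)) / (r:ℝ) * (Fintype.card V : ℝ) := by ring


/-- Theorem 2.13.  Let `H` be a graph on `v` vertices that is
bicycle-free at radius `r`, with `r ≥ 10·ln v`.  Then `exc(H) = |E| − |V|` is at most
`(ln(e·v)/r)·v`. -/
theorem excess_le_of_bicycleFree {V : Type*} [Fintype V] [DecidableEq V]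
    (H : SimpleGraph V) (r : ℕ) (hbf : BicycleFree H r)
    (hr : 10 * Real.log (Fintype.card V) ≤ (r : ℝ)) :
    (H.edgeFinset.card : ℝ) - (Fintype.card V : ℝ)
      ≤ Real.log (Real.exp 1 * (Fintype.card V : ℝ)) / (r : ℝ) * (Fintype.card V : ℝ) := by
  exact excess_le_of_bicycleFree' H r hbf hr

end NearRamanujan
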